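/- Let α ∈ K and let δ be an element of an ordered abelian group Γ containing the value group Γ_v. Define v_{α,δ} on K[X] by v_{α,δ}(Σ a_i (X - α)^i) = min_i (v(a_i) + iδ), extended to K(X). Then v_{α,δ} is a residually transcendental extension of v (the residue field of V_{α,δ} is transcendental over V/M) if and only if nδ ∈ Γ_v for some integer n ≥ 1. -/

import Mathlib

open Polynomial

/-- The valuation `v_{α,δ}` on polynomials: writing `f = Σ aᵢ (X - α)^i`,
`v_{α,δ} f = min_i (v aᵢ + i • δ)` (with value `⊤` on the zero polynomial). -/
noncomputable def vAlphaDelta {K : Type*} [Field K] {Γ : Type*}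
    [AddCommGroup Γ] [LinearOrder Γ] [IsOrderedAddMonoid Γ] (v : AddValuation K (WithTop Γ)) (α : K) (δ : Γ)
    (f : Polynomial K) : WithTop Γ :=
  (f.comp (X + C α)).support.inf
    (fun i => v ((f.comp (X + C α)).coeff i) + ((i • δ : Γ) : WithTop Γ))

section Aux

variable {K : Type*} [Field K] {Γ : Type*} [AddCommGroup Γ] [LinearOrder Γ] [IsOrderedAddMonoid Γ]
  (v : AddValuation K (WithTop Γ)) (δ : Γ)

/-- The "naive" valuation on polynomials, in terms of their own coefficients. -/
noncomputable def w0 (p : Polynomial K) : WithTop Γ :=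
  p.support.inf (fun i => v (p.coeff i) + ((i • δ : Γ) : WithTop Γ))

lemma w0_def (p : Polynomial K) :
    w0 v δ p = p.support.inf (fun i => v (p.coeff i) + ((i • δ : Γ) : WithTop Γ)) := rfl

lemma vAlphaDelta_eq (α : K) (f : Polynomial K) :
    vAlphaDelta v α δ f = w0 v δ (f.comp (X + C α)) := rfl

lemma v_ne_top {x : K} (hx : x ≠ 0) : v x ≠ ⊤ := by
  intro h
  have h1 : v x + v x⁻¹ = 0 := by
    rw [← v.map_mul, mul_inv_cancel₀ hx, v.map_one]
  rw [h, top_add] at h1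
  simp at h1

lemma w0_le {p : Polynomial K} {i : ℕ} (hi : p.coeff i ≠ 0) :
    w0 v δ p ≤ v (p.coeff i) + ((i • δ : Γ) : WithTop Γ) :=
  Finset.inf_le (mem_support_iff.mpr hi)

lemma w0_eval {p : Polynomial K} {i0 : ℕ} (h0 : p.coeff i0 ≠ 0)
    (hub : ∀ j, p.coeff j ≠ 0 →
      v (p.coeff i0) + ((i0 • δ : Γ) : WithTop Γ) ≤ v (p.coeff j) + ((j • δ : Γ) : WithTop Γ)) :
    w0 v δ p = v (p.coeff i0) + ((i0 • δ : Γ) : WithTop Γ) :=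
  le_antisymm (w0_le v δ h0) (Finset.le_inf fun j hj => hub j (mem_support_iff.mp hj))

lemma w0_C {x : K} (hx : x ≠ 0) : w0 v δ (C x) = v x := by
  have h := w0_eval v δ (i0 := 0) (p := C x) (by simpa using hx)
    (fun j hj => by
      have hj0 : j = 0 := by
        by_contra hne
        exact hj (by simp [coeff_C, hne])
      subst hj0; exact le_rfl)
  simpa using h

end Aux

section Unique

variable {K : Type*} [Field K] {Γ : Type*} [AddCommGroup Γ] [LinearOrder Γ] [IsOrderedAddMonoid Γ]
  {v : AddValuation K (WithTop Γ)} {δ : Γ}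
  (Hno : ∀ n : ℕ, 0 < n → ∀ x : K, x ≠ 0 → v x ≠ ((n • δ : Γ) : WithTop Γ))

include Hno

lemma cross_lt {a b : K} (ha : a ≠ 0) (hb : b ≠ 0) {i j : ℕ} (hij : i < j)
    (h : v a + ((i • δ : Γ) : WithTop Γ) = v b + ((j • δ : Γ) : WithTop Γ)) : False := by
  obtain ⟨γa, hγa⟩ := WithTop.ne_top_iff_exists.mp (v_ne_top v ha)
  obtain ⟨γb, hγb⟩ := WithTop.ne_top_iff_exists.mp (v_ne_top v hb)
  have hΓ : γa + i • δ = γb + j • δ := by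
    rw [← hγa, ← hγb] at h
    exact_mod_cast h
  have hbinv : v b⁻¹ = ((-γb : Γ) : WithTop Γ) := by
    have h1 : v b + v b⁻¹ = 0 := by
      rw [← v.map_mul, mul_inv_cancel₀ hb, v.map_one]
    obtain ⟨γc, hγc⟩ := WithTop.ne_top_iff_exists.mp (v_ne_top v (inv_ne_zero hb))
    rw [← hγb, ← hγc] at h1
    rw [← hγc]
    have h2 : γb + γc = 0 := by exact_mod_cast h1
    rw [eq_neg_of_add_eq_zero_right h2]
  have hsmul : (j - i) • δ + i • δ = j • δ := by
    rw [← add_nsmul, Nat.sub_add_cancel hij.le]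
  have hval : γa - γb = (j - i) • δ := by
    have h4 : γb + ((j - i) • δ + i • δ) = γa + i • δ := by rw [hsmul, hΓ]
    have h3 : γb + (j - i) • δ = γa := by
      rw [← add_assoc] at h4
      exact add_right_cancel h4
    rw [← h3]; abel
  refine Hno (j - i) (by omega) (a * b⁻¹) (mul_ne_zero ha (inv_ne_zero hb)) ?_
  rw [v.map_mul, ← hγa, hbinv, ← WithTop.coe_add, ← hval]
  norm_cast
  abel

lemma cross_eq {a b : K} (ha : a ≠ 0) (hb : b ≠ 0) {i j : ℕ}
    (h : v a + ((i • δ : Γ) : WithTop Γ) = v b + ((j • δ : Γ) : WithTop Γ)) :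
    i = j ∧ v a = v b := by
  rcases lt_trichotomy i j with hij | hij | hij
  · exact absurd (cross_lt Hno ha hb hij h) (by simp)
  · subst hij
    exact ⟨rfl, WithTop.add_right_cancel WithTop.coe_ne_top h⟩
  · exact absurd (cross_lt Hno hb ha hij h.symm) (by simp)

lemma exists_unique_min {p : Polynomial K} (hp : p ≠ 0) :
    ∃ i0, p.coeff i0 ≠ 0 ∧ w0 v δ p = v (p.coeff i0) + ((i0 • δ : Γ) : WithTop Γ) ∧
      ∀ j, j ≠ i0 → w0 v δ p < v (p.coeff j) + ((j • δ : Γ) : WithTop Γ) := by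
  obtain ⟨i0, hi0, hinf⟩ :=
    Finset.exists_mem_eq_inf p.support (support_nonempty.mpr hp)
      (fun i => v (p.coeff i) + ((i • δ : Γ) : WithTop Γ))
  have hc0 : p.coeff i0 ≠ 0 := mem_support_iff.mp hi0
  have hMtop : w0 v δ p ≠ ⊤ := by
    rw [show w0 v δ p = _ from hinf]
    exact WithTop.add_ne_top.mpr ⟨v_ne_top v hc0, WithTop.coe_ne_top⟩
  refine ⟨i0, hc0, hinf, fun j hj => ?_⟩
  by_cases hcj : p.coeff j = 0
  · rw [hcj, v.map_zero, top_add]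
    exact lt_top_iff_ne_top.mpr hMtop
  · refine lt_of_le_of_ne (w0_le v δ hcj) ?_
    intro heq
    have h := (cross_eq Hno hcj hc0 (heq.symm.trans hinf)).1
    exact hj h

end Unique

lemma key_val {K : Type*} [Field K] {Γ : Type*} [AddCommGroup Γ] [LinearOrder Γ] [IsOrderedAddMonoid Γ]
    (v : AddValuation K (WithTop Γ)) (α : K) (δ : Γ)
    (w : AddValuation (RatFunc K) (WithTop Γ))
    (hw : ∀ f : Polynomial K,
      w (algebraMap (Polynomial K) (RatFunc K) f) = vAlphaDelta v α δ f)
    {n : ℕ} (hn : 0 < n) {x : K} (hx : x ≠ 0)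
    (hvx : v x = ((n • δ : Γ) : WithTop Γ)) (d : ℕ) (hd : 0 < d) (a : ℕ → K)
    (ha : ∀ i, 0 ≤ v (a i)) :
    w ((algebraMap (Polynomial K) (RatFunc K) ((X - C α) ^ n) *
          (algebraMap (Polynomial K) (RatFunc K) (C x))⁻¹) ^ d +
        ∑ i ∈ Finset.range d, algebraMap (Polynomial K) (RatFunc K) (C (a i)) *
          (algebraMap (Polynomial K) (RatFunc K) ((X - C α) ^ n) *
            (algebraMap (Polynomial K) (RatFunc K) (C x))⁻¹) ^ i) = 0 := by
  set π := algebraMap (Polynomial K) (RatFunc K) with hπ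
  set u : RatFunc K := π (C x) with hu_def
  set t : RatFunc K := π (X - C α) with ht_def
  have hu : u ≠ 0 := RatFunc.algebraMap_ne_zero (C_ne_zero.mpr hx)
  set φ : RatFunc K := π ((X - C α) ^ n) * u⁻¹ with hφ_def
  have hφt : φ = t ^ n * u⁻¹ := by rw [hφ_def, ht_def, map_pow]
  set P : Polynomial K :=
    (X - C α) ^ (n * d) + ∑ i ∈ Finset.range d, C (a i * x ^ (d - i)) * (X - C α) ^ (n * i)
    with hP_def
  set S : RatFunc K := φ ^ d + ∑ i ∈ Finset.range d, π (C (a i)) * φ ^ i with hS_def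
  -- Step 1 : clear denominators
  have step1 : S * u ^ d = π P := by
    rw [hS_def, hP_def, map_add, map_sum, add_mul, Finset.sum_mul]
    congr 1
    · rw [hφt, mul_pow, inv_pow, ← pow_mul, map_pow, mul_assoc,
        inv_mul_cancel₀ (pow_ne_zero d hu), mul_one, ht_def, ← map_pow]
    · refine Finset.sum_congr rfl (fun i hi => ?_)
      have hid : i ≤ d := (Finset.mem_range.mp hi).le
      have h1 : φ ^ i = t ^ (n * i) * (u ^ i)⁻¹ := by
        rw [hφt, mul_pow, inv_pow, ← pow_mul]
      rw [map_mul, map_pow, C_mul, C_pow, map_mul, map_pow, h1, pow_sub₀ u hu hid,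
        ht_def, ← map_pow]
      ring
  -- Step 2 : recentre at `α`
  have step2 : P.comp (X + C α) =
      X ^ (n * d) + ∑ i ∈ Finset.range d, C (a i * x ^ (d - i)) * X ^ (n * i) := by
    simp [hP_def, add_comp, sum_comp, mul_comp, C_comp, pow_comp, sub_comp, X_comp,
      add_sub_cancel_right]
  set Q : Polynomial K :=
    X ^ (n * d) + ∑ i ∈ Finset.range d, C (a i * x ^ (d - i)) * X ^ (n * i) with hQ_def
  -- Step 3 : value of `Q`
  have hQcoeff : ∀ k, Q.coeff k = (if k = n * d then 1 else 0) +
      ∑ i ∈ Finset.range d, if k = n * i then a i * x ^ (d - i) else 0 := by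
    intro k
    rw [hQ_def, coeff_add, coeff_X_pow, finset_sum_coeff]
    congr 1
    refine Finset.sum_congr rfl (fun i _ => ?_)
    rw [coeff_C_mul, coeff_X_pow, mul_ite, mul_one, mul_zero]
  have hQnd : Q.coeff (n * d) = 1 := by
    rw [hQcoeff, if_pos rfl]
    rw [Finset.sum_eq_zero, add_zero]
    intro i hi
    rw [if_neg]
    intro h
    have h1 := Nat.eq_of_mul_eq_mul_left hn h
    have h2 := Finset.mem_range.mp hi
    omega
  have hub : ∀ k, Q.coeff k ≠ 0 →
      (((n * d) • δ : Γ) : WithTop Γ) ≤ v (Q.coeff k) + ((k • δ : Γ) : WithTop Γ) := by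
    intro k hk
    by_cases hknd : k = n * d
    · subst hknd
      rw [hQnd, v.map_one, zero_add]
    · have hQk0 : Q.coeff k =
          ∑ i ∈ Finset.range d, if k = n * i then a i * x ^ (d - i) else 0 := by
        rw [hQcoeff, if_neg hknd, zero_add]
      obtain ⟨i, hi, hne⟩ := Finset.exists_ne_zero_of_sum_ne_zero (hQk0 ▸ hk)
      have hki : k = n * i := by
        by_contra h
        rw [if_neg h] at hne
        exact hne rfl
      rw [if_pos hki] at hne
      have hQk : Q.coeff k = a i * x ^ (d - i) := by
        rw [hQk0, Finset.sum_eq_single i]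
        · rw [if_pos hki]
        · intro j hj hji
          rw [if_neg]
          intro h
          exact hji ((Nat.eq_of_mul_eq_mul_left hn ((hki ▸ h : n * i = n * j))).symm)
        · intro h
          exact absurd hi h
      have hicast : (d - i) • (((n • δ : Γ)) : WithTop Γ)
          = ((((d - i) * n) • δ : Γ) : WithTop Γ) := by
        rw [← WithTop.coe_nsmul, smul_smul]
      have harith : (d - i) * n + n * i = n * d := by
        obtain ⟨e, rfl⟩ : ∃ e, d = i + e := ⟨d - i, by
          have h2 := Finset.mem_range.mp hi; omega⟩
        rw [Nat.add_sub_cancel_left]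
        ring
      rw [hQk, v.map_mul, v.map_pow, hvx, hicast, hki, add_assoc, ← WithTop.coe_add,
        ← add_nsmul, harith]
      exact le_add_of_nonneg_left (ha i)
  have hw0Q : w0 v δ Q = (((n * d) • δ : Γ) : WithTop Γ) := by
    have h := w0_eval v δ (p := Q) (i0 := n * d) (by rw [hQnd]; exact one_ne_zero)
      (fun j hj => by rw [hQnd, v.map_one, zero_add]; exact hub j hj)
    rw [h, hQnd, v.map_one, zero_add]
  -- Step 4 : conclude
  have hwu : w u = v x := by
    rw [hu_def, hw, vAlphaDelta_eq, C_comp, w0_C v δ hx]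
  have hwud : w (u ^ d) = (((n * d) • δ : Γ) : WithTop Γ) := by
    rw [w.map_pow, hwu, hvx, ← WithTop.coe_nsmul, smul_smul, mul_comm d n]
  have hfinal : w S + (((n * d) • δ : Γ) : WithTop Γ) = (((n * d) • δ : Γ) : WithTop Γ) := by
    rw [← hwud, ← w.map_mul, step1, hw, vAlphaDelta_eq, step2, hw0Q, hwud]
  have h0 : w S + (((n * d) • δ : Γ) : WithTop Γ) = 0 + (((n * d) • δ : Γ) : WithTop Γ) := by
    rw [hfinal, zero_add]
  exact WithTop.add_right_cancel WithTop.coe_ne_top h0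

/-- Let `α ∈ K` and `δ` an element of an ordered abelian group `Γ`
containing the value group of `v`, and let `w` be the valuation `v_{α,δ}` on `K(X)`.
Then the residue field of `V_{α,δ}` is transcendental over the residue field of `V`
(expressed: there is a `w`-unit whose residue satisfies no monic polynomial with
coefficients coming from `V`) if and only if `n • δ ∈ Γ_v` for some `n ≥ 1`. -/
theorem stmt6 {K : Type*} [Field K] {Γ : Type*} [AddCommGroup Γ] [LinearOrder Γ] [IsOrderedAddMonoid Γ]
    (v : AddValuation K (WithTop Γ)) (α : K) (δ : Γ)
    (w : AddValuation (RatFunc K) (WithTop Γ))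
    (hw : ∀ f : Polynomial K,
      w (algebraMap (Polynomial K) (RatFunc K) f) = vAlphaDelta v α δ f) :
    (∃ φ : RatFunc K, w φ = 0 ∧ ∀ d : ℕ, 0 < d → ∀ a : ℕ → K, (∀ i, 0 ≤ v (a i)) →
        w (φ ^ d + ∑ i ∈ Finset.range d,
            algebraMap (Polynomial K) (RatFunc K) (C (a i)) * φ ^ i) = 0) ↔
      (∃ n : ℕ, 0 < n ∧ ∃ x : K, x ≠ 0 ∧ v x = ((n • δ : Γ) : WithTop Γ)) := by
  constructor
  · rintro ⟨φ, hφ0, hφ⟩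
    by_contra hno
    push_neg at hno
    set π := algebraMap (Polynomial K) (RatFunc K) with hπ
    have hφne : φ ≠ 0 := by
      intro h
      rw [h, w.map_zero] at hφ0
      simp at hφ0
    have hf : φ.num ≠ 0 := RatFunc.num_ne_zero hφne
    have hg : φ.denom ≠ 0 := φ.denom_ne_zero
    have hπg : π φ.denom ≠ 0 := RatFunc.algebraMap_ne_zero hg
    have hfg : π φ.num = φ * π φ.denom := (div_eq_iff hπg).mp (φ.num_div_denom)
    set F := φ.num.comp (X + C α) with hF_def
    set G := φ.denom.comp (X + C α) with hG_def
    have hcompinv : ∀ p : Polynomial K, (p.comp (X + C α)).comp (X - C α) = p := by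
      intro p
      rw [comp_assoc]
      simp
    have hF : F ≠ 0 := by
      intro h
      apply hf
      have h2 : F.comp (X - C α) = φ.num := hcompinv φ.num
      rw [h, zero_comp] at h2
      exact h2.symm
    have hG : G ≠ 0 := by
      intro h
      apply hg
      have h2 : G.comp (X - C α) = φ.denom := hcompinv φ.denom
      rw [h, zero_comp] at h2
      exact h2.symm
    obtain ⟨i0, hFc, hFeq, hFlt⟩ := exists_unique_min hno hF
    obtain ⟨j0, hGc, hGeq, hGlt⟩ := exists_unique_min hno hG
    have hMN : w0 v δ F = w0 v δ G := by
      have h1 : w (π φ.num) = w (π φ.denom) := by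
        rw [hfg, w.map_mul, hφ0, zero_add]
      rw [hw, hw, vAlphaDelta_eq, vAlphaDelta_eq] at h1
      exact h1
    obtain ⟨rfl, hvv⟩ := cross_eq hno hFc hGc (by rw [← hFeq, hMN, hGeq])
    set c := F.coeff i0 * (G.coeff i0)⁻¹ with hc_def
    have hcG : c * G.coeff i0 = F.coeff i0 := by
      rw [hc_def, mul_assoc, inv_mul_cancel₀ hGc, mul_one]
    have hvc : v c = 0 := by
      have h1 : v c + v (G.coeff i0) = 0 + v (G.coeff i0) := by
        rw [← v.map_mul, hcG, hvv, zero_add]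
      exact WithTop.add_right_cancel (v_ne_top v hGc) h1
    have hMtop : w0 v δ F ≠ ⊤ := by
      rw [hFeq]
      exact WithTop.add_ne_top.mpr ⟨v_ne_top v hFc, WithTop.coe_ne_top⟩
    set H := F - C c * G with hH_def
    have hHc : ∀ j, w0 v δ F < v (H.coeff j) + ((j • δ : Γ) : WithTop Γ) := by
      intro j
      have hHj : H.coeff j = F.coeff j - c * G.coeff j := by
        rw [hH_def, coeff_sub, coeff_C_mul]
      by_cases hji : j = i0
      · subst hji
        rw [hHj, hcG, sub_self, v.map_zero, top_add]
        exact lt_top_iff_ne_top.mpr hMtop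
      · have h1 : w0 v δ F < v (F.coeff j) + ((j • δ : Γ) : WithTop Γ) := hFlt j hji
        have h2 : w0 v δ F < v (c * G.coeff j) + ((j • δ : Γ) : WithTop Γ) := by
          rw [v.map_mul, hvc, zero_add, hMN]
          exact hGlt j hji
        have h3 : (v (F.coeff j)) ⊓ (v (c * G.coeff j)) ≤ v (H.coeff j) := by
          rw [hHj]
          exact v.map_sub _ _
        calc w0 v δ F
            < (v (F.coeff j) + ((j • δ : Γ) : WithTop Γ))
              ⊓ (v (c * G.coeff j) + ((j • δ : Γ) : WithTop Γ)) := lt_min h1 h2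
          _ = (v (F.coeff j) ⊓ v (c * G.coeff j)) + ((j • δ : Γ) : WithTop Γ) :=
              min_add_add_right _ _ _
          _ ≤ v (H.coeff j) + ((j • δ : Γ) : WithTop Γ) := add_le_add_left h3 _
    have hwH : w0 v δ F < w0 v δ H := by
      rw [w0_def v δ H]
      exact (Finset.lt_inf_iff (lt_top_iff_ne_top.mpr hMtop)).mpr (fun b _ => hHc b)
    have hsub : π (φ.num - C c * φ.denom) = (φ - π (C c)) * π φ.denom := by
      rw [map_sub, map_mul, hfg]
      ring
    have hcomp : (φ.num - C c * φ.denom).comp (X + C α) = H := by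
      rw [hH_def, sub_comp, mul_comp, C_comp]
    have hGtop : w0 v δ G ≠ ⊤ := by
      rw [hGeq]
      exact WithTop.add_ne_top.mpr ⟨v_ne_top v hGc, WithTop.coe_ne_top⟩
    have hlt : 0 + w0 v δ G < w (φ - π (C c)) + w0 v δ G := by
      have h1 : w (π (φ.num - C c * φ.denom)) = w (φ - π (C c)) + w (π φ.denom) := by
        rw [hsub, w.map_mul]
      have h2 : w (π φ.denom) = w0 v δ G := by rw [hw, vAlphaDelta_eq]
      have h3 : w (π (φ.num - C c * φ.denom)) = w0 v δ H := by
        rw [hw, vAlphaDelta_eq, hcomp]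
      rw [zero_add, ← h2, ← h1, h3, h2, ← hMN]
      exact hwH
    have hpos : 0 < w (φ - π (C c)) := (WithTop.add_lt_add_iff_right hGtop).mp hlt
    have hone := hφ 1 one_pos (fun _ => -c) (fun i => by rw [v.map_neg, hvc])
    have hexp : φ ^ 1 + ∑ i ∈ Finset.range 1, π (C (-c)) * φ ^ i = φ - π (C c) := by
      rw [Finset.sum_range_one, pow_one, pow_zero, mul_one, map_neg, map_neg,
        sub_eq_add_neg]
    rw [hexp] at hone
    exact absurd hone (ne_of_gt hpos)
  · rintro ⟨n, hn, x, hx, hvx⟩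
    refine ⟨algebraMap (Polynomial K) (RatFunc K) ((X - C α) ^ n) *
      (algebraMap (Polynomial K) (RatFunc K) (C x))⁻¹, ?_,
      fun d hd a ha => key_val v α δ w hw hn hx hvx d hd a ha⟩
    have h := key_val v α δ w hw hn hx hvx 1 one_pos (fun _ => 0)
      (fun i => by rw [v.map_zero]; exact le_top)
    simpa using h
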